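/- Let C be a finitary extensive category, let h : A ⟶ B be a morphism and I an object of C. If the morphism coprod.map h (𝟙 I) : A ⨿ I ⟶ B ⨿ I is an isomorphism, then h is an isomorphism. (In particular, the functor (−) ⨿ I reflects isomorphisms.) -/

import Mathlib

open CategoryTheory CategoryTheory.Limits

universe v u

/-- In a finitary extensive category, the functor `(−) ⨿ I` reflects isomorphisms: if
`coprod.map h (𝟙 I)` is an isomorphism, then so is `h`. -/
theorem isIso_of_isIso_coprod_map_id {C : Type u} [Category.{v} C] [FinitaryExtensive C]
    {A B I : C} (h : A ⟶ B) (hiso : IsIso (coprod.map h (𝟙 I))) : IsIso h := by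
  have vk := FinitaryExtensive.vanKampen _ (coprodIsCoprod B I)
  let c' : BinaryCofan A I := BinaryCofan.mk (h ≫ coprod.inl) coprod.inr
  have hc' : Nonempty (IsColimit (c' : Cocone (pair A I))) := by
    refine ⟨IsColimit.ofIsoColimit (coprodIsCoprod A I)
      (Cocones.ext (@asIso _ _ _ _ (coprod.map h (𝟙 I)) hiso) ?_)⟩
    rintro ⟨⟨⟩⟩
    · exact coprod.inl_map h (𝟙 I)
    · exact (coprod.inr_map h (𝟙 I)).trans (Category.id_comp _)
  have hcomm : mapPair h (𝟙 I) ≫ (BinaryCofan.mk (coprod.inl : B ⟶ B ⨿ I) coprod.inr).ι =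
      c'.ι ≫ (Functor.const _).map (𝟙 (B ⨿ I)) := by
    ext ⟨⟨⟩⟩
    · exact (Category.comp_id _).symm
    · exact (Category.id_comp _).trans (Category.comp_id _).symm
  have hP := (vk c' (mapPair h (𝟙 I)) (𝟙 (B ⨿ I)) hcomm (mapPair_equifibered _)).mp hc'
    ⟨WalkingPair.left⟩
  simp only [c', BinaryCofan.mk, mapPair] at hP
  have hQ : IsPullback (coprod.inl : B ⟶ B ⨿ I) (𝟙 B) (𝟙 (B ⨿ I)) coprod.inl :=
    IsPullback.of_vert_isIso ⟨by simp⟩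
  have := IsPullback.isoIsPullback_hom_snd _ _ hP hQ
  replace this := (Category.comp_id _).symm.trans this
  rw [← this]
  exact Iso.isIso_hom _
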